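/- Let δ̄ > 0 and δ̲ > 0, and let e, ρ : ℝ → ℝ be functions differentiable at a point t with ρ(t) > 0 and −δ̲ < e(t)/ρ(t) < δ̄. Then the transformed error ε(s) = (1/2)·ln((δ̲ + e(s)/ρ(s))/(δ̄ − e(s)/ρ(s))) is differentiable at t with derivative ε̇(t) = (1/(2ρ(t)))·(1/(δ̲ + e(t)/ρ(t)) + 1/(δ̄ − e(t)/ρ(t)))·(ė(t) − e(t)·ρ̇(t)/ρ(t)). -/

import Mathlib

/-- If `e` and `ρ` are differentiable at `t` with `ρ(t) > 0` and
`−δ̲ < e(t)/ρ(t) < δ̄`, then the transformed error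
`ε(s) = (1/2)·ln((δ̲ + e(s)/ρ(s))/(δ̄ − e(s)/ρ(s)))` is differentiable at `t` with
`ε̇(t) = (1/(2ρ(t)))·(1/(δ̲ + e(t)/ρ(t)) + 1/(δ̄ − e(t)/ρ(t)))·(ė(t) − e(t)ρ̇(t)/ρ(t))`. -/
theorem transformed_error_hasDerivAt
    (δbar δlow : ℝ) (hδbar : 0 < δbar) (hδlow : 0 < δlow)
    (e ρ : ℝ → ℝ) (t edot ρdot : ℝ)
    (he : HasDerivAt e edot t) (hρ : HasDerivAt ρ ρdot t)
    (hρpos : 0 < ρ t)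
    (hlb : -δlow < e t / ρ t) (hub : e t / ρ t < δbar) :
    HasDerivAt
      (fun s => (1 / 2) * Real.log ((δlow + e s / ρ s) / (δbar - e s / ρ s)))
      ((1 / (2 * ρ t)) * (1 / (δlow + e t / ρ t) + 1 / (δbar - e t / ρ t)) *
        (edot - e t * ρdot / ρ t)) t := by
  have hρne : ρ t ≠ 0 := ne_of_gt hρpos
  set q : ℝ := (edot * ρ t - e t * ρdot) / (ρ t) ^ 2 with hqdef
  have hq : HasDerivAt (fun s => e s / ρ s) q t := he.div hρ hρne
  have hApos : 0 < δlow + e t / ρ t := by linarith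
  have hBpos : 0 < δbar - e t / ρ t := by linarith
  have hA : HasDerivAt (fun s => δlow + e s / ρ s) q t := by
    exact hq.const_add δlow
  have hB : HasDerivAt (fun s => δbar - e s / ρ s) (-q) t := by
    exact hq.const_sub δbar
  have hlogA : HasDerivAt (fun s => Real.log (δlow + e s / ρ s))
      (q / (δlow + e t / ρ t)) t := hA.log (ne_of_gt hApos)
  have hlogB : HasDerivAt (fun s => Real.log (δbar - e s / ρ s))
      ((-q) / (δbar - e t / ρ t)) t := hB.log (ne_of_gt hBpos)
  have hmain : HasDerivAt
      (fun s => (1 / 2) * (Real.log (δlow + e s / ρ s) - Real.log (δbar - e s / ρ s)))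
      ((1 / 2) * (q / (δlow + e t / ρ t) - (-q) / (δbar - e t / ρ t))) t :=
    (hlogA.sub hlogB).const_mul (1 / 2)
  -- the functions agree on a neighborhood of t
  have hAc : ContinuousAt (fun s => δlow + e s / ρ s) t := hA.continuousAt
  have hBc : ContinuousAt (fun s => δbar - e s / ρ s) t := hB.continuousAt
  have hev : (fun s => (1 / 2) * (Real.log (δlow + e s / ρ s) - Real.log (δbar - e s / ρ s)))
      =ᶠ[nhds t] (fun s => (1 / 2) * Real.log ((δlow + e s / ρ s) / (δbar - e s / ρ s))) := by
    filter_upwards [hAc.eventually (eventually_gt_nhds hApos),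
      hBc.eventually (eventually_gt_nhds hBpos)] with s hAs hBs
    rw [Real.log_div (ne_of_gt hAs) (ne_of_gt hBs)]
  have := hmain.congr_of_eventuallyEq hev.symm
  refine this.congr_deriv ?_
  rw [hqdef]
  have h1 : ρ t * δlow + e t ≠ 0 := by
    have : ρ t * δlow + e t = ρ t * (δlow + e t / ρ t) := by field_simp
    rw [this]; positivity
  have h2 : ρ t * δbar - e t ≠ 0 := by
    have : ρ t * δbar - e t = ρ t * (δbar - e t / ρ t) := by field_simp
    rw [this]; positivity
  have eA : δlow + e t / ρ t = (ρ t * δlow + e t) / ρ t := by field_simp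
  have eB : δbar - e t / ρ t = (ρ t * δbar - e t) / ρ t := by field_simp
  rw [eA, eB]
  field_simp
  ring
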